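/- Let k be an algebraically closed field, let S̃ = ∏_{i=1}^m Mat(d_i, k) be a semisimple k-algebra with simple factors S̃_i = Mat(d_i, k), and let S be a unital k-subalgebra of S̃ isomorphic to k^r; let e_1, …, e_r ∈ S be the orthogonal idempotents that are the images of the standard basis vectors of k^r (so e_1 + ⋯ + e_r = 1 and S = k e_1 × ⋯ × k e_r, with S_t := k e_t). Assume that dim_k(S̃ e_t) ≤ 2 for all 1 ≤ t ≤ r (this dimension equals the length of S̃ ⊗_S S_t as an S-module). Then for each 1 ≤ t ≤ r one of the following holds: (1) there is an index i with d_i = 1 such that e_t equals the identity element of the factor S̃_i (so S_t = S̃_i); (2) there are indices i ≠ j with d_i = d_j = 1 such that e_t equals the sum of the identity elements of S̃_i and S̃_j (so S_t embeds diagonally into S̃_i × S̃_j ≅ k × k); (3) there are an index q ≠ t and an index i with d_i = 2 such that e_t + e_q equals the identity element of the factor S̃_i, e_t and e_q have zero components in all other factors, and there is an invertible element u of S̃_i = Mat(2, k) with u e_t u^{-1} and u e_q u^{-1} the two diagonal matrix idempotents; i.e., S_t × S_q is conjugate inside S̃_i to the subalgebra of diagonal matrices of Mat(2, k). -/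

import Mathlib

noncomputable section

section Aux

open Matrix

variable {k : Type} [Field k] {m : ℕ} {d : Fin m → ℕ}

lemma key3 (E : ∀ i : Fin m, Matrix (Fin (d i)) (Fin (d i)) k)
    (hlen : Module.finrank k ↥(LinearMap.range (LinearMap.mulRight k E)) ≤ 2)
    (v : Fin 3 → (∀ i : Fin m, Matrix (Fin (d i)) (Fin (d i)) k))
    (hv : ∀ s, ∃ x, x * E = v s) (hli : LinearIndependent k v) : False := by
  have h1 : Submodule.span k (Set.range v) ≤ LinearMap.range (LinearMap.mulRight k E) := by
    rw [Submodule.span_le]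
    rintro _ ⟨s, rfl⟩
    exact ⟨(hv s).choose, (hv s).choose_spec⟩
  have h2 := Submodule.finrank_mono (t := LinearMap.range (LinearMap.mulRight k E)) h1
  rw [finrank_span_eq_card hli] at h2
  simp at h2
  omega

lemma key_indep3 (E : ∀ i : Fin m, Matrix (Fin (d i)) (Fin (d i)) k)
    (hlen : Module.finrank k ↥(LinearMap.range (LinearMap.mulRight k E)) ≤ 2)
    (v0 v1 v2 : ∀ i : Fin m, Matrix (Fin (d i)) (Fin (d i)) k)
    (hv0 : ∃ x, x * E = v0) (hv1 : ∃ x, x * E = v1) (hv2 : ∃ x, x * E = v2)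
    (i0 i1 i2 : Fin m)
    (x0 y0 : Fin (d i0)) (x1 y1 : Fin (d i1)) (x2 y2 : Fin (d i2))
    (h00 : v0 i0 x0 y0 = 1) (h01 : v1 i0 x0 y0 = 0) (h02 : v2 i0 x0 y0 = 0)
    (h10 : v0 i1 x1 y1 = 0) (h11 : v1 i1 x1 y1 = 1) (h12 : v2 i1 x1 y1 = 0)
    (h20 : v0 i2 x2 y2 = 0) (h21 : v1 i2 x2 y2 = 0) (h22 : v2 i2 x2 y2 = 1) :
    False := by
  apply key3 E hlen ![v0, v1, v2] (by intro s; fin_cases s <;> assumption)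
  rw [Fintype.linearIndependent_iff]
  intro g hg
  rw [Fin.sum_univ_three] at hg
  simp only [Matrix.cons_val_zero, Matrix.cons_val_one, Matrix.head_cons,
    Matrix.cons_val_two, Matrix.tail_cons] at hg
  have E0 := congrFun (congrFun (congrFun hg i0) x0) y0
  have E1 := congrFun (congrFun (congrFun hg i1) x1) y1
  have E2 := congrFun (congrFun (congrFun hg i2) x2) y2
  simp only [Pi.add_apply, Pi.smul_apply, Matrix.add_apply, Matrix.smul_apply,
    Pi.zero_apply, Matrix.zero_apply, smul_eq_mul, h00, h01, h02, h10, h11, h12,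
    h20, h21, h22, mul_one, mul_zero, add_zero, zero_add] at E0 E1 E2
  intro s
  fin_cases s <;> simpa using (by assumption : _ = (0:k))

lemma exists_entry {n : ℕ} (p : Matrix (Fin n) (Fin n) k) (hp : p ≠ 0) :
    ∃ a b, p a b ≠ 0 := by
  by_contra h
  push_neg at h
  exact hp (by ext a b; simpa using h a b)

lemma rowmul {n : ℕ} (p : Matrix (Fin n) (Fin n) k) (a : Fin n) (c : k) (x0 x' y' : Fin n) :
    ((Matrix.of fun x y => if x = x0 then (if y = a then c else 0) else 0 :
        Matrix (Fin n) (Fin n) k) * p) x' y'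
      = if x' = x0 then c * p a y' else 0 := by
  rw [Matrix.mul_apply]
  by_cases h : x' = x0 <;>
    simp [h, ite_mul, zero_mul, Finset.sum_ite_eq, Finset.sum_ite_eq']


lemma fact_three (E : ∀ i : Fin m, Matrix (Fin (d i)) (Fin (d i)) k)
    (hlen : Module.finrank k ↥(LinearMap.range (LinearMap.mulRight k E)) ≤ 2)
    (i0 i1 i2 : Fin m) (h01 : i0 ≠ i1) (h02 : i0 ≠ i2) (h12 : i1 ≠ i2)
    (hn0 : E i0 ≠ 0) (hn1 : E i1 ≠ 0) (hn2 : E i2 ≠ 0) : False := by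
  obtain ⟨a0, b0, hab0⟩ := exists_entry (E i0) hn0
  obtain ⟨a1, b1, hab1⟩ := exists_entry (E i1) hn1
  obtain ⟨a2, b2, hab2⟩ := exists_entry (E i2) hn2
  apply key_indep3 E hlen
    (Pi.single i0 ((E i0 a0 b0)⁻¹ • 1) * E)
    (Pi.single i1 ((E i1 a1 b1)⁻¹ • 1) * E)
    (Pi.single i2 ((E i2 a2 b2)⁻¹ • 1) * E)
    ⟨_, rfl⟩ ⟨_, rfl⟩ ⟨_, rfl⟩ i0 i1 i2 a0 b0 a1 b1 a2 b2 <;>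
  simp [Pi.mul_apply, Pi.single_eq_same, Pi.single_eq_of_ne,
    Pi.single_eq_of_ne h01, Pi.single_eq_of_ne h01.symm,
    Pi.single_eq_of_ne h02, Pi.single_eq_of_ne h02.symm,
    Pi.single_eq_of_ne h12, Pi.single_eq_of_ne h12.symm,
    smul_mul_assoc, inv_mul_cancel₀, hab0, hab1, hab2]

lemma fact_rows3 (E : ∀ i : Fin m, Matrix (Fin (d i)) (Fin (d i)) k)
    (hlen : Module.finrank k ↥(LinearMap.range (LinearMap.mulRight k E)) ≤ 2)
    (i : Fin m) (hd : 3 ≤ d i) (hE : E i ≠ 0) : False := by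
  obtain ⟨a, b, hab⟩ := exists_entry (E i) hE
  set c := E i a b with hc
  let R : Fin (d i) → Matrix (Fin (d i)) (Fin (d i)) k := fun x0 =>
    Matrix.of fun x y => if x = x0 then (if y = a then c⁻¹ else 0) else 0
  apply key_indep3 E hlen
    (Pi.single i (R ⟨0, by omega⟩) * E) (Pi.single i (R ⟨1, by omega⟩) * E)
    (Pi.single i (R ⟨2, by omega⟩) * E)
    ⟨_, rfl⟩ ⟨_, rfl⟩ ⟨_, rfl⟩ i i i ⟨0, by omega⟩ b ⟨1, by omega⟩ b ⟨2, by omega⟩ b <;>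
  · simp only [Pi.mul_apply, Pi.single_eq_same, R, rowmul, ← hc]
    simp [Fin.ext_iff, inv_mul_cancel₀ hab]

lemma fact_rows2 (E : ∀ i : Fin m, Matrix (Fin (d i)) (Fin (d i)) k)
    (hlen : Module.finrank k ↥(LinearMap.range (LinearMap.mulRight k E)) ≤ 2)
    (i i' : Fin m) (hii' : i' ≠ i) (hd : 2 ≤ d i) (hE : E i ≠ 0) (hE' : E i' ≠ 0) :
    False := by
  obtain ⟨a, b, hab⟩ := exists_entry (E i) hE
  obtain ⟨a', b', hab'⟩ := exists_entry (E i') hE'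
  set c := E i a b with hc
  let R : Fin (d i) → Matrix (Fin (d i)) (Fin (d i)) k := fun x0 =>
    Matrix.of fun x y => if x = x0 then (if y = a then c⁻¹ else 0) else 0
  apply key_indep3 E hlen
    (Pi.single i (R ⟨0, by omega⟩) * E) (Pi.single i (R ⟨1, by omega⟩) * E)
    (Pi.single i' ((E i' a' b')⁻¹ • 1) * E)
    ⟨_, rfl⟩ ⟨_, rfl⟩ ⟨_, rfl⟩ i i i' ⟨0, by omega⟩ b ⟨1, by omega⟩ b a' b' <;>
  · simp only [Pi.mul_apply, Pi.single_eq_same, Pi.single_eq_of_ne hii',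
      Pi.single_eq_of_ne (Ne.symm hii'), R, rowmul, ← hc]
    simp [Fin.ext_iff, inv_mul_cancel₀ hab, inv_mul_cancel₀ hab', smul_mul_assoc]

lemma fact_full2 (E : ∀ i : Fin m, Matrix (Fin (d i)) (Fin (d i)) k)
    (hlen : Module.finrank k ↥(LinearMap.range (LinearMap.mulRight k E)) ≤ 2)
    (i : Fin m) (hd : 2 ≤ d i) (hE : E i = 1) : False := by
  let P : Fin (d i) → Fin (d i) → Matrix (Fin (d i)) (Fin (d i)) k := fun x0 y0 =>
    Matrix.of fun x y => if x = x0 ∧ y = y0 then 1 else 0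
  have hm : ∀ x0 y0 x y, (P x0 y0 * E i) x y = if x = x0 ∧ y = y0 then 1 else 0 := by
    intro x0 y0 x y
    rw [hE, mul_one]
    rfl
  apply key_indep3 E hlen
    (Pi.single i (P ⟨0, by omega⟩ ⟨0, by omega⟩) * E)
    (Pi.single i (P ⟨0, by omega⟩ ⟨1, by omega⟩) * E)
    (Pi.single i (P ⟨1, by omega⟩ ⟨0, by omega⟩) * E)
    ⟨_, rfl⟩ ⟨_, rfl⟩ ⟨_, rfl⟩ i i i
    ⟨0, by omega⟩ ⟨0, by omega⟩ ⟨0, by omega⟩ ⟨1, by omega⟩ ⟨1, by omega⟩ ⟨0, by omega⟩ <;>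
  · simp only [Pi.mul_apply, Pi.single_eq_same, hm]
    simp [Fin.ext_iff]

section TwoByTwo

variable {n : Type} [Fintype n] [DecidableEq n]

lemma sum_two {M : Type} [AddCommMonoid M] (z0 z1 : n) (hz : z0 ≠ z1)
    (hall : ∀ x : n, x = z0 ∨ x = z1) (f : n → M) :
    ∑ x, f x = f z0 + f z1 := by
  have huniv : (Finset.univ : Finset n) = {z0, z1} := by
    ext x
    simp only [Finset.mem_univ, Finset.mem_insert, Finset.mem_singleton, true_iff]
    exact hall x
  rw [huniv, Finset.sum_insert (by simpa using hz), Finset.sum_singleton]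

lemma exists_entry' (p : Matrix n n k) (hp : p ≠ 0) : ∃ a b, p a b ≠ 0 := by
  by_contra h
  push_neg at h
  exact hp (by ext a b; simpa using h a b)

lemma conj_to_diag (z0 z1 : n) (hz : z0 ≠ z1) (hall : ∀ x : n, x = z0 ∨ x = z1)
    (p : Matrix n n k) (hp : p * p = p) (h0 : p ≠ 0) (h1 : p ≠ 1) :
    ∃ u : (Matrix n n k)ˣ, (u : Matrix n n k) * p * (↑u⁻¹ : Matrix n n k)
      = Matrix.diagonal (fun x => if x = z0 then (1 : k) else 0) := by
  obtain ⟨a, b, hab⟩ := exists_entry' p h0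
  set v : n → k := fun x => p x b with hv
  have hpv : p *ᵥ v = v := by
    funext x
    simpa [Matrix.mulVec, dotProduct, hv, ← Matrix.mul_apply] using
      congrFun (congrFun hp x) b
  have hq : (1 - p) * (1 - p) = 1 - p := by
    rw [mul_sub, sub_mul, sub_mul, mul_one, one_mul, hp]
    simp
  have hq0 : (1 : Matrix n n k) - p ≠ 0 := sub_ne_zero.mpr (Ne.symm h1)
  obtain ⟨a', b', hab'⟩ := exists_entry' _ hq0
  set w : n → k := fun x => (1 - p) x b' with hw
  have hpw : p *ᵥ w = 0 := by
    have hpq : p * (1 - p) = 0 := by rw [mul_sub, mul_one, hp, sub_self]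
    funext x
    simp only [Matrix.mulVec, dotProduct, hw, Pi.zero_apply]
    rw [← Matrix.mul_apply]
    exact congrFun (congrFun hpq x) b'
  set B : Matrix n n k := Matrix.of (fun x j => if j = z0 then v x else w x) with hB
  have hBmul : ∀ cc : n → k, B *ᵥ cc = fun x => cc z0 • v x + cc z1 • w x := by
    intro cc
    funext x
    rw [Matrix.mulVec, dotProduct, sum_two z0 z1 hz hall]
    simp [hB, hz, Ne.symm hz, mul_comm]
  have hdet : IsUnit B.det := by
    rw [isUnit_iff_ne_zero]
    intro hdet0
    obtain ⟨cc, hcc, hBcc⟩ := Matrix.exists_mulVec_eq_zero_iff.mpr hdet0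
    rw [hBmul] at hBcc
    have h2' : cc z0 • v + cc z1 • w = (0 : n → k) := hBcc
    -- apply p to the relation
    have h2 : cc z0 • v = 0 := by
      have := congrArg (fun f => p *ᵥ f) h2'
      simpa [Matrix.mulVec_add, Matrix.mulVec_smul, hpv, hpw] using this
    have hz0 : cc z0 = 0 := by
      by_contra hcz
      have := congrFun h2 a
      simp only [Pi.smul_apply, Pi.zero_apply, smul_eq_mul] at this
      exact hab (by
        rcases mul_eq_zero.mp this with h | h
        · exact absurd h hcz
        · exact h)
    have hz1 : cc z1 = 0 := by
      by_contra hcz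
      have := congrFun h2' a'
      rw [hz0] at this
      simp only [Pi.add_apply, Pi.smul_apply, Pi.zero_apply, zero_smul, zero_add,
        smul_eq_mul] at this
      exact hab' (by
        rcases mul_eq_zero.mp this with h | h
        · exact absurd h hcz
        · exact h)
    apply hcc
    funext x
    rcases hall x with rfl | rfl
    · exact hz0
    · exact hz1
  set U : (Matrix n n k)ˣ := B.nonsingInvUnit hdet with hU
  have hUcoe : (U : Matrix n n k) = B := rfl
  refine ⟨U⁻¹, ?_⟩
  have hinv : ((U⁻¹)⁻¹ : (Matrix n n k)ˣ) = U := inv_inv U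
  rw [hinv, hUcoe]
  -- goal : ↑U⁻¹ * p * B = diagonal ...
  have key : p * B = B * Matrix.diagonal (fun x => if x = z0 then (1:k) else 0) := by
    ext x j
    rcases hall j with h | h <;> rw [h]
    · have : (p * B) x z0 = (p *ᵥ v) x := by
        rw [Matrix.mul_apply, Matrix.mulVec, dotProduct]
        congr 1
        funext c
        simp [hB]
      rw [this, hpv]
      simp [Matrix.mul_apply, Matrix.diagonal_apply, sum_two z0 z1 hz hall, hB,
        hz, Ne.symm hz]
    · have : (p * B) x z1 = (p *ᵥ w) x := by
        rw [Matrix.mul_apply, Matrix.mulVec, dotProduct]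
        congr 1
        funext c
        simp [hB, Ne.symm hz]
      rw [this, hpw]
      simp [Matrix.mul_apply, Matrix.diagonal_apply, sum_two z0 z1 hz hall, hB,
        hz, Ne.symm hz]
  calc (↑U⁻¹ : Matrix n n k) * p * B = (↑U⁻¹ : Matrix n n k) * (p * B) := by
        rw [mul_assoc]
    _ = (↑U⁻¹ : Matrix n n k) * ((U : Matrix n n k) *
          Matrix.diagonal (fun x => if x = z0 then (1:k) else 0)) := by rw [key, hUcoe]
    _ = Matrix.diagonal (fun x => if x = z0 then (1:k) else 0) := by
        rw [← mul_assoc, Units.inv_mul, one_mul]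

end TwoByTwo

section Helpers

variable {n : Type} [Fintype n] [DecidableEq n]

lemma one_by_one (z0 : n) (hall : ∀ x : n, x = z0) (p : Matrix n n k)
    (hp : p * p = p) (h0 : p ≠ 0) : p = 1 := by
  have huniv : (Finset.univ : Finset n) = {z0} := by
    ext x; simp [hall x]
  have hentry : p z0 z0 ≠ 0 := by
    intro h
    exact h0 (by ext a b; rw [hall a, hall b, h]; simp)
  have hsq : p z0 z0 * p z0 z0 = p z0 z0 := by
    have := congrFun (congrFun hp z0) z0
    rwa [Matrix.mul_apply, huniv, Finset.sum_singleton] at this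
  have h1 : p z0 z0 = 1 := by
    have := mul_left_cancel₀ hentry (hsq.trans (mul_one _).symm)
    exact this
  ext a b
  rw [hall a, hall b, h1]
  simp

lemma conj_mul' {u : (Matrix n n k)ˣ} (X Y : Matrix n n k) :
    ((u : Matrix n n k) * X * (↑u⁻¹ : Matrix n n k)) *
        ((u : Matrix n n k) * Y * (↑u⁻¹ : Matrix n n k))
      = (u : Matrix n n k) * (X * Y) * (↑u⁻¹ : Matrix n n k) := by
  simp only [mul_assoc]
  rw [← mul_assoc (↑u⁻¹ : Matrix n n k) (↑u : Matrix n n k), Units.inv_mul, one_mul]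

lemma conj_back {u : (Matrix n n k)ˣ} (X : Matrix n n k) :
    (↑u⁻¹ : Matrix n n k) * ((u : Matrix n n k) * X * (↑u⁻¹ : Matrix n n k)) *
      (u : Matrix n n k) = X := by
  simp only [mul_assoc]
  rw [Units.inv_mul, mul_one, ← mul_assoc, Units.inv_mul, one_mul]

end Helpers

end Aux

/-- Lemma on semisimple algebras.  Let `St = ∏ i, Mat(d i, k)` be a
semisimple algebra over an algebraically closed field `k` and let `e 1, …, e r` be the
nonzero pairwise orthogonal idempotents summing to `1` giving a subalgebra
`S = k·e 1 × ⋯ × k·e r ≅ k^r`.  If `dim_k (St · e t) ≤ 2` for all `t`, then each `e t`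
is: the identity of a `1×1` factor; or the sum of the identities of two distinct `1×1`
factors; or, together with a unique partner `e q`, conjugate inside a single `2×2`
factor to the two diagonal matrix idempotents. -/
theorem semisimple_subalgebra_lemma
    (k : Type) [Field k] [IsAlgClosed k] (m : ℕ) (d : Fin m → ℕ)
    (r : ℕ) (e : Fin r → (∀ i : Fin m, Matrix (Fin (d i)) (Fin (d i)) k))
    (hidem : ∀ t, IsIdempotentElem (e t))
    (horth : ∀ t t', t ≠ t' → e t * e t' = 0)
    (hsum : ∑ t, e t = 1)
    (hne : ∀ t, e t ≠ 0)
    (hlen : ∀ t, Module.finrank k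
      ↥(LinearMap.range (LinearMap.mulRight k (e t))) ≤ 2) :
    ∀ t : Fin r,
      (∃ i : Fin m, d i = 1 ∧ e t = Pi.single i 1) ∨
      (∃ i j : Fin m, i ≠ j ∧ d i = 1 ∧ d j = 1 ∧
        e t = Pi.single i 1 + Pi.single j 1) ∨
      (∃ (q : Fin r) (i : Fin m), q ≠ t ∧ d i = 2 ∧
        e t + e q = Pi.single i 1 ∧
        (∀ i' : Fin m, i' ≠ i → e t i' = 0 ∧ e q i' = 0) ∧
        ∃ u : (Matrix (Fin (d i)) (Fin (d i)) k)ˣ,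
          (u : Matrix (Fin (d i)) (Fin (d i)) k) * e t i * (↑u⁻¹ : Matrix (Fin (d i)) (Fin (d i)) k) =
            Matrix.diagonal (fun x : Fin (d i) => if (x : ℕ) = 0 then (1 : k) else 0) ∧
          (u : Matrix (Fin (d i)) (Fin (d i)) k) * e q i * (↑u⁻¹ : Matrix (Fin (d i)) (Fin (d i)) k) =
            Matrix.diagonal (fun x : Fin (d i) => if (x : ℕ) = 1 then (1 : k) else 0)) := by

  classical
  intro t
  have hex : ∃ i, e t i ≠ 0 := by
    by_contra h
    push_neg at h
    exact hne t (funext h)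
  set A : Finset (Fin m) := Finset.univ.filter (fun i => e t i ≠ 0) with hA
  have hmemA : ∀ i, i ∈ A ↔ e t i ≠ 0 := by intro i; simp [hA]
  have hd_pos : ∀ i, e t i ≠ 0 → 1 ≤ d i := by
    intro i hi
    by_contra h
    exact hi (by ext a b; exact absurd a.isLt (by omega))
  have hd_le : ∀ q i, e q i ≠ 0 → d i ≤ 2 := by
    intro q i hi
    by_contra h
    exact fact_rows3 (e q) (hlen q) i (by omega) hi
  have hcard2 : A.card ≤ 2 := by
    by_contra h
    push_neg at h
    obtain ⟨i0, i1, i2, h0, h1, h2, h01, h02, h12⟩ := Finset.two_lt_card_iff.mp h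
    exact fact_three (e t) (hlen t) i0 i1 i2 h01 h02 h12
      ((hmemA i0).mp h0) ((hmemA i1).mp h1) ((hmemA i2).mp h2)
  have hcard1 : 1 ≤ A.card :=
    Finset.card_pos.mpr ⟨hex.choose, (hmemA _).mpr hex.choose_spec⟩
  have hone : ∀ q i, d i = 1 → e q i ≠ 0 → e q i = 1 := by
    intro q i hdi hqi
    refine one_by_one (⟨0, by omega⟩ : Fin (d i)) (fun x => by
      apply Fin.ext
      have := x.isLt
      omega) (e q i) (congrFun (hidem q) i) hqi
  have hc : A.card = 1 ∨ A.card = 2 := by omega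
  rcases hc with hc | hc
  · -- one nonzero factor
    obtain ⟨i, hAi⟩ := Finset.card_eq_one.mp hc
    have hti : e t i ≠ 0 := (hmemA i).mp (by rw [hAi]; exact Finset.mem_singleton_self i)
    have hzero : ∀ i', i' ≠ i → e t i' = 0 := by
      intro i' h1
      by_contra h
      have : i' ∈ A := (hmemA i').mpr h
      rw [hAi, Finset.mem_singleton] at this
      exact h1 this
    have h1le := hd_pos i hti
    have hle2 := hd_le t i hti
    have hdd : d i = 1 ∨ d i = 2 := by omega
    rcases hdd with hdi | hdi
    · left
      refine ⟨i, hdi, ?_⟩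
      funext i'
      by_cases h1 : i' = i
      · subst h1
        rw [Pi.single_eq_same]
        exact hone t i' hdi hti
      · rw [Pi.single_eq_of_ne h1]
        exact hzero i' h1
    · -- partner case
      right; right
      have hno1 : e t i ≠ 1 := fun h => fact_full2 (e t) (hlen t) i (by omega) h
      have hidem_i : ∀ q', e q' i * e q' i = e q' i := fun q' => congrFun (hidem q') i
      set z0 : Fin (d i) := ⟨0, by omega⟩ with hz0def
      set z1 : Fin (d i) := ⟨1, by omega⟩ with hz1def
      have hz : z0 ≠ z1 := by simp [hz0def, hz1def, Fin.ext_iff]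
      have hall : ∀ x : Fin (d i), x = z0 ∨ x = z1 := by
        intro x
        by_cases h : (x : ℕ) = 0
        · left; apply Fin.ext; simpa [hz0def] using h
        · right; apply Fin.ext
          have := x.isLt
          simp only [hz1def]
          omega
      obtain ⟨u, hu⟩ := conj_to_diag z0 z1 hz hall (e t i) (hidem_i t) hti hno1
      set D : Matrix (Fin (d i)) (Fin (d i)) k :=
        Matrix.diagonal (fun x => if x = z0 then 1 else 0) with hD
      set g : Fin r → Matrix (Fin (d i)) (Fin (d i)) k :=
        fun q' => (u : Matrix (Fin (d i)) (Fin (d i)) k) * e q' i *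
          (↑u⁻¹ : Matrix (Fin (d i)) (Fin (d i)) k) with hg
      have hsum_i : ∑ q', e q' i = 1 := by
        have := congrFun hsum i
        simpa [Finset.sum_apply] using this
      have hgsum : ∑ q', g q' = 1 := by
        simp only [hg]
        rw [← Finset.sum_mul, ← Finset.mul_sum, hsum_i, mul_one, Units.mul_inv]
      have horth_i : ∀ q', q' ≠ t → e t i * e q' i = 0 ∧ e q' i * e t i = 0 :=
        fun q' h => ⟨congrFun (horth t q' (Ne.symm h)) i, congrFun (horth q' t h) i⟩
      have hgrow : ∀ q', q' ≠ t → (∀ y, g q' z0 y = 0) ∧ (∀ x, g q' x z0 = 0) := by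
        intro q' h
        have hDg : D * g q' = 0 := by
          rw [← hu]
          simp only [hg, conj_mul', (horth_i q' h).1, Matrix.mul_zero, Matrix.zero_mul]
        have hgD : g q' * D = 0 := by
          rw [← hu]
          simp only [hg, conj_mul', (horth_i q' h).2, Matrix.mul_zero, Matrix.zero_mul]
        constructor
        · intro y
          have := congrFun (congrFun hDg z0) y
          rw [Matrix.mul_apply, sum_two z0 z1 hz hall] at this
          simpa [hD, Matrix.diagonal_apply, hz, Ne.symm hz] using this
        · intro x
          have := congrFun (congrFun hgD x) z0
          rw [Matrix.mul_apply, sum_two z0 z1 hz hall] at this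
          simpa [hD, Matrix.diagonal_apply, hz, Ne.symm hz] using this
      have hsum_entry : ∑ q', g q' z1 z1 = 1 := by
        have := congrFun (congrFun hgsum z1) z1
        simpa [Matrix.sum_apply, Matrix.one_apply] using this
      have hgt : g t z1 z1 = 0 := by
        simp only [hg]
        rw [hu, hD]
        simp [Matrix.diagonal_apply, Ne.symm hz]
      rw [← Finset.add_sum_erase _ _ (Finset.mem_univ t), hgt, zero_add] at hsum_entry
      obtain ⟨q, hqmem, hqne0⟩ := Finset.exists_ne_zero_of_sum_ne_zero
        (by rw [hsum_entry]; exact one_ne_zero)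
      have hqt : q ≠ t := Finset.ne_of_mem_erase hqmem
      have hgq_idem : g q * g q = g q := by
        simp only [hg, conj_mul', hidem_i q]
      have hcc : g q z1 z1 * g q z1 z1 = g q z1 z1 := by
        have := congrFun (congrFun hgq_idem z1) z1
        rw [Matrix.mul_apply, sum_two z0 z1 hz hall, (hgrow q hqt).2 z1,
          zero_mul, zero_add] at this
        exact this
      have hc1 : g q z1 z1 = 1 := mul_left_cancel₀ hqne0 (hcc.trans (mul_one _).symm)
      set D' : Matrix (Fin (d i)) (Fin (d i)) k :=
        Matrix.diagonal (fun x => if x = z1 then (1:k) else 0) with hD'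
      have hgq : g q = D' := by
        ext x y
        rcases hall x with h | h <;> rcases hall y with h' | h' <;> rw [h, h'] <;>
          simp [hD', Matrix.diagonal_apply, hz, Ne.symm hz, (hgrow q hqt).1,
            (hgrow q hqt).2, hc1]
      have hqi_ne : e q i ≠ 0 := by
        intro h
        apply hqne0
        simp [hg, h]
      have hqzero : ∀ i', i' ≠ i → e q i' = 0 := by
        intro i' h
        by_contra hh
        exact fact_rows2 (e q) (hlen q) i i' h (by omega) hqi_ne hh
      refine ⟨q, i, hqt, hdi, ?_, fun i' h => ⟨hzero i' h, hqzero i' h⟩, u, ?_, ?_⟩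
      · funext i'
        by_cases h1 : i' = i
        · subst h1
          rw [Pi.add_apply, Pi.single_eq_same]
          have hgq' : (u : Matrix (Fin (d i')) (Fin (d i')) k) * e q i' *
              (↑u⁻¹ : Matrix (Fin (d i')) (Fin (d i')) k) = D' := hgq
          have hconj : (u : Matrix (Fin (d i')) (Fin (d i')) k) * (e t i' + e q i') *
              (↑u⁻¹ : Matrix (Fin (d i')) (Fin (d i')) k) = 1 := by
            rw [mul_add, add_mul, hu, hgq']
            ext x y
            rcases hall x with h | h <;> rcases hall y with h' | h' <;> rw [h, h'] <;>
              simp [hD, hD', Matrix.diagonal_apply, Matrix.one_apply, hz, Ne.symm hz]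
          have h3 := conj_back (u := u) (e t i' + e q i')
          rw [hconj, mul_one, Units.inv_mul] at h3
          exact h3.symm
        · rw [Pi.add_apply, Pi.single_eq_of_ne h1, hzero i' h1, hqzero i' h1, add_zero]
      · have hfun : (fun x : Fin (d i) => if x = z0 then (1:k) else 0)
            = (fun x : Fin (d i) => if (x : ℕ) = 0 then (1:k) else 0) := by
          funext x
          rcases hall x with h | h <;> subst h <;>
            simp [hz0def, hz1def, Fin.ext_iff]
        rw [hu, hD, hfun]
      · have hgq' : (u : Matrix (Fin (d i)) (Fin (d i)) k) * e q i *
            (↑u⁻¹ : Matrix (Fin (d i)) (Fin (d i)) k) = D' := hgq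
        have hfun : (fun x : Fin (d i) => if x = z1 then (1:k) else 0)
            = (fun x : Fin (d i) => if (x : ℕ) = 1 then (1:k) else 0) := by
          funext x
          rcases hall x with h | h <;> subst h <;>
            simp [hz0def, hz1def, Fin.ext_iff]
        rw [hgq', hD', hfun]
  · -- two nonzero factors
    obtain ⟨i, j, hij, hAij⟩ := Finset.card_eq_two.mp hc
    have hti : e t i ≠ 0 := (hmemA i).mp (by rw [hAij]; simp)
    have htj : e t j ≠ 0 := (hmemA j).mp (by rw [hAij]; simp)
    have hzero : ∀ i', i' ≠ i → i' ≠ j → e t i' = 0 := by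
      intro i' h1 h2
      by_contra h
      have : i' ∈ A := (hmemA i').mpr h
      rw [hAij] at this
      simp [Finset.mem_insert, Finset.mem_singleton, h1, h2] at this
    have hdi : d i = 1 := by
      have h1 := hd_pos i hti
      by_contra h
      exact fact_rows2 (e t) (hlen t) i j (Ne.symm hij) (by omega) hti htj
    have hdj : d j = 1 := by
      have h1 := hd_pos j htj
      by_contra h
      exact fact_rows2 (e t) (hlen t) j i hij (by omega) htj hti
    right; left
    refine ⟨i, j, hij, hdi, hdj, ?_⟩
    funext i'
    by_cases h1 : i' = i
    · subst h1
      rw [Pi.add_apply, Pi.single_eq_same, Pi.single_eq_of_ne hij, add_zero]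
      exact hone t i' hdi hti
    · by_cases h2 : i' = j
      · subst h2
        rw [Pi.add_apply, Pi.single_eq_same, Pi.single_eq_of_ne (Ne.symm hij), zero_add]
        exact hone t i' hdj htj
      · rw [Pi.add_apply, Pi.single_eq_of_ne h1, Pi.single_eq_of_ne h2, add_zero]
        exact hzero i' h1 h2

end
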